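/- Negative cycle detection, soundness (Theorem 2.3, second part). For the Bellman–Ford iterates d from source s: if there exists a vertex v with d |V| v < d (|V|−1) v (a strict improvement after |V| − 1 iterations), then there exists a cycle reachable from s whose total weight is negative. -/

import Mathlib

/-- `IsWalk E p t a b` : `p 0 = a`, `p t = b`, and each consecutive pair is an edge. -/
def IsWalk {V : Type*} (E : V → V → Prop) (p : ℕ → V) (t : ℕ) (a b : V) : Prop :=
  p 0 = a ∧ p t = b ∧ ∀ i < t, E (p i) (p (i + 1))

/-- Weight of a walk with `t` edges. -/
def walkWeight {V : Type*} (w : V → V → ℝ) (p : ℕ → V) (t : ℕ) : ℝ :=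
  ∑ i ∈ Finset.range t, w (p i) (p (i + 1))

open Classical in
/-- Bellman–Ford iterates from source `s`. -/
noncomputable def BF {V : Type*} (E : V → V → Prop) (w : V → V → ℝ) (s : V) :
    ℕ → V → EReal
  | 0, v => if v = s then 0 else ⊤
  | (t + 1), v =>
      min (BF E w s t v) (⨅ u : {u : V // E u v}, (BF E w s t u.1 + (w u.1 v : EReal)))

section Aux

variable {V : Type*} [Fintype V] (E : V → V → Prop) (w : V → V → ℝ) (s : V)

lemma BF_mono {t t' : ℕ} (h : t ≤ t') (v : V) : BF E w s t' v ≤ BF E w s t v := by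
  induction t' with
  | zero =>
    have : t = 0 := Nat.le_zero.mp h
    subst this; exact le_refl _
  | succ t' ih =>
    rcases Nat.lt_or_ge t (t' + 1) with h' | h'
    · refine le_trans ?_ (ih (by omega))
      have : BF E w s (t' + 1) v = min (BF E w s t' v)
          (⨅ u : {u : V // E u v}, (BF E w s t' u.1 + (w u.1 v : EReal))) := rfl
      rw [this]; exact min_le_left _ _
    · have : t = t' + 1 := by omega
      subst this; exact le_refl _

lemma walkWeight_add (p : ℕ → V) (a b : ℕ) :
    walkWeight w p (a + b) = walkWeight w p a + walkWeight w (fun k => p (a + k)) b := by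
  unfold walkWeight
  rw [Finset.sum_range_add]
  rfl

lemma BF_le_walk : ∀ (l : ℕ) (p : ℕ → V) (v : V), IsWalk E p l s v →
    BF E w s l v ≤ (walkWeight w p l : EReal) := by
  intro l
  induction l with
  | zero =>
    intro p v hw
    obtain ⟨h0, hl, _⟩ := hw
    have hv : v = s := by rw [← hl, h0]
    simp [BF, hv, walkWeight]
  | succ l ih =>
    intro p v hw
    obtain ⟨h0, hl, he⟩ := hw
    have hwalk : IsWalk E p l s (p l) := ⟨h0, rfl, fun i hi => he i (by omega)⟩
    have hedge : E (p l) v := hl ▸ he l (by omega)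
    have h1 : BF E w s (l + 1) v ≤ BF E w s l (p l) + (w (p l) v : EReal) := by
      have hdef : BF E w s (l + 1) v = min (BF E w s l v)
          (⨅ u : {u : V // E u v}, (BF E w s l u.1 + (w u.1 v : EReal))) := rfl
      rw [hdef]
      exact le_trans (min_le_right _ _)
        (iInf_le (fun u : {u : V // E u v} => BF E w s l u.1 + (w u.1 v : EReal)) ⟨p l, hedge⟩)
    have h2 := ih p (p l) hwalk
    have h3 : walkWeight w p (l + 1) = walkWeight w p l + w (p l) v := by
      unfold walkWeight
      rw [Finset.sum_range_succ, hl]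
    rw [h3, EReal.coe_add]
    exact h1.trans (add_le_add_left h2 _)

lemma BF_exists_walk : ∀ (t : ℕ) (v : V), BF E w s t v ≠ ⊤ →
    ∃ (p : ℕ → V) (l : ℕ), l ≤ t ∧ IsWalk E p l s v ∧
      (walkWeight w p l : EReal) ≤ BF E w s t v := by
  intro t
  induction t with
  | zero =>
    intro v h
    simp only [BF] at h ⊢
    by_cases hv : v = s
    · subst hv
      refine ⟨fun _ => v, 0, le_refl _, ⟨rfl, rfl, by omega⟩, ?_⟩
      simp [walkWeight]
    · simp [hv] at h
  | succ t ih =>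
    intro v h
    have hdef : BF E w s (t + 1) v = min (BF E w s t v)
        (⨅ u : {u : V // E u v}, (BF E w s t u.1 + (w u.1 v : EReal))) := rfl
    rw [hdef] at h ⊢
    rcases le_or_gt (BF E w s t v)
        (⨅ u : {u : V // E u v}, (BF E w s t u.1 + (w u.1 v : EReal))) with hle | hlt
    · rw [min_eq_left hle] at h ⊢
      obtain ⟨p, l, hlt', hw', hle'⟩ := ih v h
      exact ⟨p, l, by omega, hw', hle'⟩
    · rw [min_eq_right hlt.le] at h ⊢
      have hne : Nonempty {u : V // E u v} := by
        by_contra hne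
        rw [not_nonempty_iff] at hne
        rw [iInf_of_empty] at h
        exact h rfl
      obtain ⟨u, hu⟩ := Finite.exists_min
        (fun u : {u : V // E u v} => BF E w s t u.1 + (w u.1 v : EReal))
      have hinf : (⨅ u : {u : V // E u v}, (BF E w s t u.1 + (w u.1 v : EReal)))
          = BF E w s t u.1 + (w u.1 v : EReal) :=
        le_antisymm (iInf_le _ u) (le_iInf hu)
      rw [hinf] at h ⊢
      have hbt : BF E w s t u.1 ≠ ⊤ := by
        intro htop
        rw [htop, EReal.top_add_coe] at h
        exact h rfl
      obtain ⟨q, l, hlq, hq, hle'⟩ := ih u.1 hbt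
      refine ⟨fun k => if k ≤ l then q k else v, l + 1, by omega, ?_, ?_⟩
      · refine ⟨by simp [hq.1], by simp, ?_⟩
        intro k hk
        rcases Nat.lt_or_ge k l with hkl | hkl
        · have h1 : k ≤ l := hkl.le
          have h2 : k + 1 ≤ l := hkl
          simpa [h1, h2] using hq.2.2 k hkl
        · have hk' : k = l := by omega
          subst hk'
          have h1 : k ≤ k := le_refl k
          have h2 : ¬ (k + 1 ≤ k) := by omega
          simp only [h1, if_pos, h2, if_neg, if_true, if_false]
          rw [hq.2.1]
          exact u.2
      · have hwe : walkWeight w (fun k => if k ≤ l then q k else v) (l + 1)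
            = walkWeight w q l + w u.1 v := by
          unfold walkWeight
          rw [Finset.sum_range_succ]
          congr 1
          · refine Finset.sum_congr rfl fun k hk => ?_
            have hkl : k < l := Finset.mem_range.mp hk
            have h1 : k ≤ l := hkl.le
            have h2 : k + 1 ≤ l := hkl
            simp [h1, h2]
          · have h1 : l ≤ l := le_refl l
            have h2 : ¬ (l + 1 ≤ l) := by omega
            simp only [h1, if_pos, h2, if_neg, if_true, if_false]
            rw [hq.2.1]
        rw [hwe, EReal.coe_add]
        exact add_le_add_left hle' _

end Aux

/-- Negative cycle detection, soundness: a strict improvement at step `|V|`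
implies the existence of a negative-weight cycle reachable from `s`. -/
theorem bellmanFord_negCycle_sound
    {V : Type*} [Fintype V] [Nonempty V]
    (E : V → V → Prop) (w : V → V → ℝ) (s : V)
    (himp : ∃ v : V, BF E w s (Fintype.card V) v < BF E w s (Fintype.card V - 1) v) :
    ∃ (c : V) (p : ℕ → V) (l : ℕ), 1 ≤ l ∧ IsWalk E p l c c ∧
      (∃ (q : ℕ → V) (lq : ℕ), IsWalk E q lq s c) ∧ walkWeight w p l < 0 := by
  classical
  obtain ⟨v, hv⟩ := himp
  set n := Fintype.card V with hn
  have hn1 : 1 ≤ n := Fintype.card_pos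
  have hvt : BF E w s n v ≠ ⊤ := by
    intro h
    rw [h] at hv
    exact not_top_lt (hv.trans_le le_top)
  obtain ⟨p, l, hln, hwalk, hle⟩ := BF_exists_walk E w s n v hvt
  have hl : l = n := by
    by_contra hne
    have hl' : l ≤ n - 1 := by omega
    have h2 : BF E w s (n - 1) v ≤ BF E w s n v :=
      ((BF_mono E w s hl' v).trans (BF_le_walk E w s l p v hwalk)).trans hle
    exact absurd hv (not_lt.mpr h2)
  subst hl
  -- pigeonhole: some vertex repeats among p 0, ..., p l
  obtain ⟨a, b, hab, heq⟩ := Fintype.exists_ne_map_eq_of_card_lt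
      (fun k : Fin (n + 1) => p k.val) (by simp only [hn]; simp)
  obtain ⟨i, j, hij, hjn, hpij⟩ : ∃ i j : ℕ, i < j ∧ j ≤ n ∧ p i = p j := by
    rcases lt_or_gt_of_ne hab with h | h
    · exact ⟨a.val, b.val, h, by omega, heq⟩
    · exact ⟨b.val, a.val, h, by omega, heq.symm⟩
  set m := j - i with hm
  set r := n - j with hr
  have hm1 : 1 ≤ m := by omega
  have him : i + m = j := by omega
  have hjr : j + r = n := by omega
  -- spliced walk
  set p' : ℕ → V := fun k => if k < i then p k else p (k + m) with hp'
  have hp'walk : IsWalk E p' (i + r) s v := by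
    refine ⟨?_, ?_, ?_⟩
    · by_cases h0 : 0 < i
      · simpa [hp', h0] using hwalk.1
      · have hi0 : i = 0 := by omega
        have : p' 0 = p (0 + m) := by simp [hp']; omega
        rw [this]
        have : (0 : ℕ) + m = j := by omega
        rw [this, ← hpij]
        have : i = 0 := hi0
        rw [this] at *
        exact hwalk.1
    · have h1 : ¬ (i + r < i) := by omega
      have h2 : i + r + m = n := by omega
      simp only [hp', h1, if_neg, if_false]
      rw [h2]
      exact hwalk.2.1
    · intro k hk
      rcases Nat.lt_or_ge (k + 1) i with h1 | h1
      · have h0 : k < i := by omega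
        simpa [hp', h0, h1] using hwalk.2.2 k (by omega)
      · rcases Nat.lt_or_ge k i with h0 | h0
        · -- k + 1 = i
          have hki : k + 1 = i := by omega
          have h2 : ¬ (k + 1 < i) := by omega
          simp only [hp', h0, if_pos, h2, if_neg, if_true, if_false]
          have h3 : k + 1 + m = j := by omega
          rw [h3, ← hpij, ← hki]
          exact hwalk.2.2 k (by omega)
        · have h2 : ¬ (k < i) := by omega
          have h3 : ¬ (k + 1 < i) := by omega
          simp only [hp', h2, h3, if_neg, if_false]
          have h4 : k + 1 + m = k + m + 1 := by omega
          rw [h4]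
          exact hwalk.2.2 (k + m) (by omega)
  have hwp : walkWeight w p n = walkWeight w p i +
      (walkWeight w (fun k => p (i + k)) m + walkWeight w (fun k => p (j + k)) r) := by
    rw [show n = i + (m + r) by omega, walkWeight_add, walkWeight_add]
    rw [show (fun k => p (i + (m + k))) = fun k => p (j + k) from
      funext fun k => by congr 1; omega]
  have hwp' : walkWeight w p' (i + r) = walkWeight w p i +
      walkWeight w (fun k => p (j + k)) r := by
    rw [walkWeight_add]
    congr 1
    · unfold walkWeight
      refine Finset.sum_congr rfl fun k hk => ?_
      have hki : k < i := Finset.mem_range.mp hk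
      by_cases h1 : k + 1 < i
      · simp [hp', hki, h1]
      · have hki1 : k + 1 = i := by omega
        simp only [hp', hki, if_pos, h1, if_neg, if_true, if_false]
        have h3 : k + 1 + m = j := by omega
        rw [h3, ← hpij, ← hki1]
    · rw [show (fun k => p' (i + k)) = fun k => p (j + k) from funext fun k => by
        have h1 : ¬ (i + k < i) := by omega
        simp only [hp', h1, if_neg, if_false]
        congr 1
        omega]
  -- final inequalities
  have hb1 : BF E w s (n - 1) v ≤ (walkWeight w p' (i + r) : EReal) :=
    (BF_mono E w s (show i + r ≤ n - 1 by omega) v).trans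
      (BF_le_walk E w s (i + r) p' v hp'walk)
  have hlt : (walkWeight w p n : EReal) < (walkWeight w p' (i + r) : EReal) :=
    lt_of_le_of_lt hle (hv.trans_le hb1)
  have hltR : walkWeight w p n < walkWeight w p' (i + r) := EReal.coe_lt_coe_iff.mp hlt
  refine ⟨p i, fun k => p (i + k), m, hm1, ⟨by simp, ?_, ?_⟩,
    ⟨p, i, hwalk.1, rfl, fun k hk => hwalk.2.2 k (by omega)⟩, ?_⟩
  · show p (i + m) = p i
    rw [him, ← hpij]
  · intro k hk
    show E (p (i + k)) (p (i + (k + 1)))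
    have : i + (k + 1) = (i + k) + 1 := by omega
    rw [this]
    exact hwalk.2.2 (i + k) (by omega)
  · linarith [hwp, hwp', hltR]
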